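/- Let p be a prime and K a finite separable field extension of the rational function field F_p(x). Let D be a derivation on K such that D(x) = 1, where x denotes the image in K of the variable of F_p(x) (D is then the unique extension to K of the derivation d/dx). Let v be a normalized additive discrete valuation on K and let t ∈ K be a uniformizer for v (v(t) = 1). If f, y ∈ K satisfy the p-Riccati equation D^{p-1}(f) + f^p = y, then p·v(f) ≥ min(0, v(y), p·(v(D(t)) − 1)); equivalently, v(f) ≥ min(0, v(y)/p, v(D(t)) − 1). -/

import Mathlib

namespace PRiccatiAux

theorem wt_smul_coe (n : ℕ) (m : ℤ) : n • ((m : WithTop ℤ)) = ((n • m : ℤ) : WithTop ℤ) := by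
  induction n with
  | zero => simp
  | succ k ih => rw [succ_nsmul, ih, succ_nsmul, ← WithTop.coe_add]

theorem wt_smul_top (n : ℕ) (hn : n ≠ 0) : n • (⊤ : WithTop ℤ) = ⊤ := by
  induction n with
  | zero => simp at hn
  | succ k ih =>
    rcases Nat.eq_zero_or_pos k with h | h
    · subst h; simp
    · rw [succ_nsmul, ih (by omega)]; rfl

theorem wt_add_self_eq_zero (x : WithTop ℤ) (h : x + x = 0) : x = 0 := by
  cases x with
  | top => exact absurd h (by simp [top_add])
  | coe z =>
    rw [← WithTop.coe_add, show ((0:WithTop ℤ)) = ((0:ℤ):WithTop ℤ) from rfl, WithTop.coe_inj] at h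
    rw [show z = 0 by omega]; rfl

theorem wt_succ_le (z : ℤ) (w : WithTop ℤ) (h : (z : WithTop ℤ) < w) : ((z + 1 : ℤ) : WithTop ℤ) ≤ w := by
  cases w with
  | top => exact le_top
  | coe u => rw [WithTop.coe_lt_coe] at h; exact WithTop.coe_le_coe.2 (by omega)

theorem wt_le_of_add_one (z : ℤ) (w : WithTop ℤ) (h : (z : WithTop ℤ) ≤ w + 1) :
    ((z - 1 : ℤ) : WithTop ℤ) ≤ w := by
  cases w with
  | top => exact le_top
  | coe u =>
    rw [show ((1:WithTop ℤ)) = ((1:ℤ):WithTop ℤ) from rfl, ← WithTop.coe_add,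
      WithTop.coe_le_coe] at h
    exact WithTop.coe_le_coe.2 (by omega)

theorem int_aux (p : ℕ) (a b : ℤ) (i j : ℕ) (hi : i < p) (hj : j < p)
    (h : (p : ℤ) * a + i = (p : ℤ) * b + j) : i = j := by
  have hp : (0:ℤ) ≤ p := Int.ofNat_nonneg p
  rcases lt_trichotomy a b with hab | hab | hab
  · exfalso
    have : (p:ℤ) * a + p ≤ (p:ℤ) * b := by nlinarith
    omega
  · subst hab; omega
  · exfalso
    have : (p:ℤ) * b + p ≤ (p:ℤ) * a := by nlinarith
    omega

section Valuation

variable {K : Type*} [Field K] (v : K → WithTop ℤ)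
  (hv_top : ∀ a : K, v a = ⊤ ↔ a = 0)
  (hv_mul : ∀ a b : K, v (a * b) = v a + v b)
  (hv_add : ∀ a b : K, min (v a) (v b) ≤ v (a + b))

include hv_top hv_mul in
theorem v_one : v 1 = 0 := by
  have h := hv_mul 1 1
  rw [one_mul] at h
  cases hv1 : v (1 : K) with
  | top => exact absurd (one_ne_zero ((hv_top 1).1 hv1)) (by simp)
  | coe z =>
    rw [hv1, ← WithTop.coe_add, WithTop.coe_inj] at h
    rw [show z = 0 by omega]; rfl

include hv_top hv_mul in
theorem v_neg (b : K) : v (-b) = v b := by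
  have h1 : v (-1 : K) = 0 := by
    have h := hv_mul (-1 : K) (-1 : K)
    rw [neg_mul_neg, one_mul, v_one v hv_top hv_mul] at h
    exact wt_add_self_eq_zero _ h.symm
  calc v (-b) = v ((-1) * b) := by rw [neg_one_mul]
  _ = v (-1 : K) + v b := hv_mul _ _
  _ = v b := by rw [h1, zero_add]

include hv_top hv_mul hv_add in
theorem v_add_eq (a b : K) (hab : v a < v b) : v (a + b) = v a := by
  refine le_antisymm ?_ ?_
  · by_contra hcon
    push_neg at hcon
    have h2 := hv_add (a + b) (-b)
    rw [add_neg_cancel_right, v_neg v hv_top hv_mul] at h2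
    exact absurd h2 (not_le_of_gt (lt_min hcon hab))
  · have := hv_add a b
    rwa [min_eq_left hab.le] at this

include hv_top hv_add in
theorem v_sum_ge' {ι : Type*} (s : Finset ι) (y : ι → K) (c d : WithTop ℤ)
    (h : ∀ i ∈ s, c ≤ v (y i) + d) : c ≤ v (∑ i ∈ s, y i) + d := by
  classical
  induction s using Finset.induction_on with
  | empty =>
    simp only [Finset.sum_empty]
    rw [(hv_top 0).2 rfl, top_add]; exact le_top
  | @insert a s' hni ih =>
    rw [Finset.sum_insert hni]
    have h1 : c ≤ v (y a) + d := h a (Finset.mem_insert_self a s')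
    have h2 : c ≤ v (∑ i ∈ s', y i) + d := ih fun i hi => h i (Finset.mem_insert_of_mem hi)
    have h4 : min (v (y a)) (v (∑ i ∈ s', y i)) + d ≤ v (y a + ∑ i ∈ s', y i) + d :=
      add_le_add_left (hv_add _ _) d
    refine le_trans ?_ h4
    rcases min_cases (v (y a)) (v (∑ i ∈ s', y i)) with ⟨hm, _⟩ | ⟨hm, _⟩ <;> rw [hm]
    · exact h1
    · exact h2

include hv_top hv_add in
theorem v_sum_ge {ι : Type*} (s : Finset ι) (y : ι → K) (c : WithTop ℤ)
    (h : ∀ i ∈ s, c ≤ v (y i)) : c ≤ v (∑ i ∈ s, y i) := by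
  have := v_sum_ge' v hv_top hv_add s y c 0 (fun i hi => by rw [add_zero]; exact h i hi)
  rwa [add_zero] at this

include hv_top hv_mul hv_add in
theorem v_sum_eq {ι : Type*} [DecidableEq ι] (s : Finset ι) (y : ι → K) (j₀ : ι) (hj₀ : j₀ ∈ s)
    (hne : v (y j₀) ≠ ⊤) (hmin : ∀ i ∈ s, i ≠ j₀ → v (y j₀) < v (y i)) :
    v (∑ i ∈ s, y i) = v (y j₀) := by
  obtain ⟨z, hz⟩ : ∃ z : ℤ, v (y j₀) = (z : WithTop ℤ) := by
    cases hvy : v (y j₀) with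
    | top => exact absurd hvy hne
    | coe u => exact ⟨u, rfl⟩
  rw [← Finset.add_sum_erase s y hj₀]
  have hrest : ((z + 1 : ℤ) : WithTop ℤ) ≤ v (∑ i ∈ s.erase j₀, y i) := by
    refine v_sum_ge v hv_top hv_add _ _ _ fun i hi => ?_
    have h2 := hmin i (Finset.mem_of_mem_erase hi) (Finset.ne_of_mem_erase hi)
    rw [hz] at h2
    exact wt_succ_le z _ h2
  have hlt : v (y j₀) < v (∑ i ∈ s.erase j₀, y i) := by
    rw [hz]
    exact lt_of_lt_of_le (WithTop.coe_lt_coe.2 (by omega)) hrest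
  exact v_add_eq v hv_top hv_mul hv_add _ _ hlt

end Valuation

section Main

variable {p : ℕ} [Fact p.Prime] {K : Type*} [Field K]
  (v : K → WithTop ℤ)
  (hv_top : ∀ a : K, v a = ⊤ ↔ a = 0)
  (hv_mul : ∀ a b : K, v (a * b) = v a + v b)
  (hv_add : ∀ a b : K, min (v a) (v b) ≤ v (a + b))
  (t : K) (ht : v t = 1)

include hv_top hv_mul in
theorem v_pow (a : K) (n : ℕ) : v (a ^ n) = n • v a := by
  induction n with
  | zero => rw [pow_zero, v_one v hv_top hv_mul, zero_smul]
  | succ k ih => rw [pow_succ, hv_mul, ih, succ_nsmul]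

include hv_top hv_add in
theorem v_nsmul_ge (b : K) (n : ℕ) : v b ≤ v (n • b) := by
  induction n with
  | zero => rw [zero_smul]; rw [(hv_top 0).2 rfl]; exact le_top
  | succ k ih =>
    rw [succ_nsmul]
    refine le_trans ?_ (hv_add _ _)
    exact le_min ih le_rfl

include hv_top hv_mul ht in
theorem v_t_pow (n : ℕ) : v (t ^ n) = ((n : ℤ) : WithTop ℤ) := by
  rw [v_pow v hv_top hv_mul, ht, show ((1 : WithTop ℤ)) = ((1:ℤ) : WithTop ℤ) from rfl,
    wt_smul_coe]
  norm_num

include hv_top hv_mul hv_add ht in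
theorem v_decomp_ge (h : K) (w : ℕ → K)
    (hdec : h = ∑ j ∈ Finset.range p, (w j) ^ p * t ^ j) :
    ∀ j ∈ Finset.range p, v h ≤ v ((w j) ^ p * t ^ j) := by
  classical
  intro j hj
  have hval : ∀ i : ℕ, w i ≠ 0 → ∃ z : ℤ, v ((w i) ^ p * t ^ i) = (((p : ℤ) * z + i : ℤ) : WithTop ℤ) := by
    intro i hwi
    cases hvw : v (w i) with
    | top => exact absurd ((hv_top _).1 hvw) hwi
    | coe z =>
      refine ⟨z, ?_⟩
      rw [hv_mul, v_pow v hv_top hv_mul, v_t_pow v hv_top hv_mul t ht, hvw, wt_smul_coe,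
        ← WithTop.coe_add]
      norm_num [mul_comm]
  by_cases hyj : (w j) ^ p * t ^ j = 0
  · rw [hyj, (hv_top 0).2 rfl]; exact le_top
  · set y : ℕ → K := fun i => (w i) ^ p * t ^ i with hy
    have hyj' : y j ≠ 0 := hyj
    set S : Finset ℕ := (Finset.range p).filter (fun i => y i ≠ 0) with hS
    have hsum : ∑ i ∈ S, y i = ∑ i ∈ Finset.range p, y i := Finset.sum_filter_ne_zero _
    have hjS : j ∈ S := Finset.mem_filter.2 ⟨hj, hyj'⟩
    obtain ⟨j₀, hj₀S, hj₀min⟩ := Finset.exists_min_image S (fun i => v (y i)) ⟨j, hjS⟩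
    have hyj₀ : y j₀ ≠ 0 := (Finset.mem_filter.1 hj₀S).2
    have hwj₀ : w j₀ ≠ 0 := by
      intro hcon
      apply hyj₀
      show (w j₀) ^ p * t ^ j₀ = 0
      rw [hcon, zero_pow (Fact.out (p := p.Prime)).ne_zero, zero_mul]
    have heq : v h = v (y j₀) := by
      rw [hdec, ← hsum]
      refine v_sum_eq v hv_top hv_mul hv_add S y j₀ hj₀S ?_ ?_
      · simp only [ne_eq, hv_top]; exact hyj₀
      · intro i hiS hij
        rcases lt_or_eq_of_le (hj₀min i hiS) with hlt | heq
        · exact hlt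
        · exfalso
          have hyi : y i ≠ 0 := (Finset.mem_filter.1 hiS).2
          have hwi : w i ≠ 0 := by
            intro hcon
            apply hyi
            show (w i) ^ p * t ^ i = 0
            rw [hcon, zero_pow (Fact.out (p := p.Prime)).ne_zero, zero_mul]
          obtain ⟨z1, hv1⟩ := hval j₀ hwj₀
          obtain ⟨z2, hv2⟩ := hval i hwi
          have : v (y j₀) = v (y i) := heq
          rw [hv1, hv2, WithTop.coe_inj] at this
          have hip : i < p := Finset.mem_range.1 (Finset.mem_filter.1 hiS).1
          have hj₀p : j₀ < p := Finset.mem_range.1 (Finset.mem_filter.1 hj₀S).1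
          exact hij (int_aux p z2 z1 i j₀ hip hj₀p this.symm)
    rw [heq]
    exact hj₀min j hjS

end Main

end PRiccatiAux

namespace PRiccatiAux

section Deriv

variable {p : ℕ} [Fact p.Prime] {K : Type*} [Field K]
  (D : K → K)
  (hadd : ∀ a b : K, D (a + b) = D a + D b)
  (hleib : ∀ a b : K, D (a * b) = a * D b + b * D a)

include hadd in
theorem D_zero : D 0 = 0 := by
  have h := hadd 0 0
  rw [add_zero] at h
  have h2 : D 0 + D 0 = D 0 + 0 := by rw [add_zero, ← h]
  exact add_left_cancel h2

include hleib in
theorem D_one : D 1 = 0 := by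
  have h := hleib 1 1
  rw [one_mul, one_mul] at h
  have h2 : D 1 + D 1 = D 1 + 0 := by rw [add_zero, ← h]
  exact add_left_cancel h2

include hleib in
theorem D_pow (a : K) (n : ℕ) : D (a ^ (n + 1)) = (n + 1) • (a ^ n * D a) := by
  induction n with
  | zero => simp
  | succ k ih =>
    have h0 : a ^ (k + 1 + 1) = a * a ^ (k + 1) := by ring
    rw [h0, hleib, ih, mul_smul_comm,
      show a * (a ^ k * D a) = a ^ (k + 1) * D a by ring, ← succ_nsmul]

include hleib in
theorem D_frob (hpK : (p : K) = 0) (a : K) : D (a ^ p) = 0 := by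
  have hp1 : p = (p - 1) + 1 := by
    have := (Fact.out (p := p.Prime)).two_le; omega
  rw [hp1, D_pow D hleib]
  rw [← hp1, nsmul_eq_mul, hpK, zero_mul]

include hadd in
theorem D_sum {ι : Type*} (s : Finset ι) (g : ι → K) :
    D (∑ i ∈ s, g i) = ∑ i ∈ s, D (g i) := by
  classical
  induction s using Finset.induction_on with
  | empty => simpa using D_zero D hadd
  | @insert a s' hni ih => rw [Finset.sum_insert hni, hadd, ih, Finset.sum_insert hni]

end Deriv

section KeyLemma

variable {p : ℕ} [Fact p.Prime] {K : Type*} [Field K]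
  (v : K → WithTop ℤ)
  (hv_top : ∀ a : K, v a = ⊤ ↔ a = 0)
  (hv_mul : ∀ a b : K, v (a * b) = v a + v b)
  (hv_add : ∀ a b : K, min (v a) (v b) ≤ v (a + b))
  (t : K) (ht : v t = 1)
  (D : K → K)
  (hadd : ∀ a b : K, D (a + b) = D a + D b)
  (hleib : ∀ a b : K, D (a * b) = a * D b + b * D a)

include hv_top hv_mul hv_add ht hadd hleib in
theorem key_L (hpK : (p : K) = 0)
    (hdec : ∀ u : K, ∃ w : ℕ → K, u = ∑ j ∈ Finset.range p, (w j) ^ p * t ^ j)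
    (h : K) : v h + v (D t) ≤ v (D h) + 1 := by
  obtain ⟨w, hw⟩ := hdec h
  have hDh : D h = ∑ j ∈ Finset.range p, (w j) ^ p * D (t ^ j) := by
    rw [hw, D_sum D hadd]
    refine Finset.sum_congr rfl fun j _ => ?_
    rw [hleib, D_frob D hleib hpK, mul_zero, add_zero]
  rw [hDh]
  refine v_sum_ge' v hv_top hv_add _ _ _ _ fun j hj => ?_
  match j with
  | 0 =>
    rw [pow_zero, D_one D hleib, mul_zero, (hv_top 0).2 rfl, top_add]
    exact le_top
  | (i + 1) =>
    rw [D_pow D hleib, mul_smul_comm]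
    have h1 : v h ≤ v ((w (i+1)) ^ p * t ^ (i+1)) :=
      v_decomp_ge v hv_top hv_mul hv_add t ht h w hw (i+1) hj
    have h2 : v ((w (i+1)) ^ p * t ^ (i+1)) = v ((w (i+1)) ^ p) + ((i+1 : ℤ) : WithTop ℤ) := by
      rw [hv_mul, v_t_pow v hv_top hv_mul t ht]
      norm_num
    have h3 : v ((w (i+1)) ^ p * (t ^ i * D t)) ≤
        v ((i + 1) • ((w (i+1)) ^ p * (t ^ i * D t))) :=
      v_nsmul_ge v hv_top hv_add _ _
    have h4 : v ((w (i+1)) ^ p * (t ^ i * D t)) =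
        v ((w (i+1)) ^ p) + ((i : ℤ) : WithTop ℤ) + v (D t) := by
      rw [hv_mul, hv_mul, v_t_pow v hv_top hv_mul t ht, add_assoc]
    calc v h + v (D t) ≤ v ((w (i+1)) ^ p * t ^ (i+1)) + v (D t) := add_le_add_left h1 _
    _ = (v ((w (i+1)) ^ p) + ((i : ℤ) : WithTop ℤ) + v (D t)) + 1 := by
        rw [h2]
        have : ((i + 1 : ℤ) : WithTop ℤ) = ((i : ℤ) : WithTop ℤ) + 1 := by
          rw [show ((1 : WithTop ℤ)) = ((1:ℤ) : WithTop ℤ) from rfl, ← WithTop.coe_add]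
        rw [this]
        abel
    _ ≤ v ((i + 1) • ((w (i+1)) ^ p * (t ^ i * D t))) + 1 := by
        rw [← h4]; exact add_le_add_left h3 _

end KeyLemma

section Final

variable {p : ℕ} [Fact p.Prime] {K : Type*} [Field K]
  (v : K → WithTop ℤ)
  (hv_top : ∀ a : K, v a = ⊤ ↔ a = 0)
  (hv_mul : ∀ a b : K, v (a * b) = v a + v b)
  (hv_add : ∀ a b : K, min (v a) (v b) ≤ v (a + b))
  (t : K) (ht : v t = 1)
  (D : K → K)
  (hadd : ∀ a b : K, D (a + b) = D a + D b)
  (hleib : ∀ a b : K, D (a * b) = a * D b + b * D a)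

include hv_top hv_mul hv_add ht hadd hleib in
theorem main_aux (hpK : (p : K) = 0)
    (hdec : ∀ u : K, ∃ w : ℕ → K, u = ∑ j ∈ Finset.range p, (w j) ^ p * t ^ j)
    (xK : K) (hx : D xK = 1)
    (f y : K) (hric : D^[p - 1] f + f ^ p = y) :
    min 0 (min (v y) (p • (v (D t) - 1))) ≤ p • v f := by
  have hp2 := (Fact.out (p := p.Prime)).two_le
  have hL := key_L v hv_top hv_mul hv_add t ht D hadd hleib hpK hdec
  -- v (D t) is finite
  have hDt : ∃ c₀ : ℤ, v (D t) = (c₀ : WithTop ℤ) := by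
    cases hvDt : v (D t) with
    | top =>
      exfalso
      have h1 := hL xK
      rw [hx, v_one v hv_top hv_mul, hvDt, add_top, zero_add] at h1
      exact absurd (top_le_iff.1 h1) (by simp)
    | coe c₀ => exact ⟨c₀, rfl⟩
  obtain ⟨c₀, hc₀⟩ := hDt
  by_cases hf0 : f = 0
  · rw [hf0, (hv_top 0).2 rfl, wt_smul_top p (by omega)]
    exact le_top
  · obtain ⟨m, hm⟩ : ∃ m : ℤ, v f = (m : WithTop ℤ) := by
      cases hvf : v f with
      | top => exact absurd ((hv_top f).1 hvf) hf0
      | coe m => exact ⟨m, rfl⟩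
    by_contra hcon
    push_neg at hcon
    rw [hm, wt_smul_coe] at hcon
    rw [lt_min_iff, lt_min_iff] at hcon
    obtain ⟨hlt0, hlty, hltc⟩ := hcon
    have hsub : v (D t) - 1 = ((c₀ - 1 : ℤ) : WithTop ℤ) := by
      rw [hc₀]; rfl
    rw [hsub, wt_smul_coe, WithTop.coe_lt_coe] at hltc
    have hmc : m + 1 ≤ c₀ - 1 := by
      have hppos : (0 : ℤ) < p := by exact_mod_cast (by omega : 0 < p)
      have := lt_of_mul_lt_mul_left (by simpa [smul_eq_mul] using hltc) hppos.le
      omega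
    -- iterate the key lemma
    have hiter : ∀ k : ℕ, ((m + k * (c₀ - 1) : ℤ) : WithTop ℤ) ≤ v (D^[k] f) := by
      intro k
      induction k with
      | zero => simp [hm]
      | succ k ih =>
        have h1 := hL (D^[k] f)
        rw [Function.iterate_succ_apply']
        have h2 : ((m + k * (c₀ - 1) + c₀ : ℤ) : WithTop ℤ) ≤ v (D (D^[k] f)) + 1 := by
          rw [WithTop.coe_add]
          exact le_trans (add_le_add ih (le_of_eq hc₀.symm)) h1
        have h3 := wt_le_of_add_one _ _ h2
        refine le_trans (le_of_eq ?_) h3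
        rw [WithTop.coe_inj]
        push_cast
        ring
    have hbig := hiter (p - 1)
    have hcast : ((p - 1 : ℕ) : ℤ) = (p : ℤ) - 1 := by
      rw [Nat.cast_sub (by omega)]; norm_num
    have hpm1 : (1 : ℤ) ≤ (p : ℤ) - 1 := by
      have : (2 : ℤ) ≤ p := by exact_mod_cast hp2
      omega
    have hineq : (p : ℤ) * m + 1 ≤ m + ((p - 1 : ℕ) : ℤ) * (c₀ - 1) := by
      rw [hcast]
      nlinarith [mul_le_mul_of_nonneg_left hmc (by omega : (0:ℤ) ≤ (p:ℤ) - 1)]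
    have hfp : v (f ^ p) = (((p : ℤ) * m : ℤ) : WithTop ℤ) := by
      rw [v_pow v hv_top hv_mul, hm, wt_smul_coe, nsmul_eq_mul]
    have hvy : v y = (((p : ℤ) * m : ℤ) : WithTop ℤ) := by
      rw [← hric, add_comm, ← hfp]
      refine v_add_eq v hv_top hv_mul hv_add _ _ ?_
      rw [hfp]
      calc (((p : ℤ) * m : ℤ) : WithTop ℤ) < (((p:ℤ) * m + 1 : ℤ) : WithTop ℤ) := by
            rw [WithTop.coe_lt_coe]; omega
      _ ≤ ((m + ((p - 1 : ℕ) : ℤ) * (c₀ - 1) : ℤ) : WithTop ℤ) := by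
            rw [WithTop.coe_le_coe]; exact hineq
      _ ≤ v (D^[p-1] f) := hbig
    rw [hvy] at hlty
    have : (p : ℤ) * m = p • m := by rw [nsmul_eq_mul]
    rw [this] at hlty
    exact lt_irrefl _ hlty
  
end Final

end PRiccatiAux

namespace PRiccatiAux

theorem map_frob_zmod (p : ℕ) [Fact p.Prime] (f : Polynomial (ZMod p)) :
    f.map (frobenius (ZMod p) p) = f := by
  ext n
  simp [Polynomial.coeff_map, frobenius_def, ZMod.pow_card]

theorem pow_p_eq_expand (p : ℕ) [Fact p.Prime] (g : Polynomial (ZMod p)) :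
    g ^ p = Polynomial.expand (ZMod p) p g := by
  rw [← Polynomial.map_frobenius_expand (p := p) g, map_frob_zmod]

theorem poly_split (p : ℕ) [Fact p.Prime] (f : Polynomial (ZMod p)) :
    ∃ g : ℕ → Polynomial (ZMod p), f = ∑ j ∈ Finset.range p, (g j) ^ p * Polynomial.X ^ j := by
  classical
  have hp0 : 0 < p := (Fact.out (p := p.Prime)).pos
  set g : ℕ → Polynomial (ZMod p) :=
    fun j => ∑ k ∈ Finset.range (f.natDegree + 1), Polynomial.monomial k (f.coeff (p * k + j))
    with hgdef
  have hgcoeff : ∀ j k, (g j).coeff k =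
      if k < f.natDegree + 1 then f.coeff (p * k + j) else 0 := by
    intro j k
    rw [hgdef]
    simp only
    rw [Polynomial.finset_sum_coeff,
      Finset.sum_congr rfl (fun k' _ => Polynomial.coeff_monomial),
      Finset.sum_ite_eq' (Finset.range (f.natDegree + 1)) k
        (fun k' => f.coeff (p * k' + j))]
    simp [Finset.mem_range]
  refine ⟨g, ?_⟩
  ext n
  rw [Polynomial.finset_sum_coeff]
  have hterm : ∀ j ∈ Finset.range p, j ≠ n % p →
      ((g j) ^ p * Polynomial.X ^ j).coeff n = 0 := by
    intro j hj hjn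
    rw [pow_p_eq_expand, Polynomial.coeff_mul_X_pow']
    split_ifs with h1
    · rw [Polynomial.coeff_expand hp0]
      split_ifs with h2
      · exfalso
        obtain ⟨m, hm⟩ := h2
        have hn : n = p * m + j := by omega
        apply hjn
        rw [hn, Nat.mul_add_mod, Nat.mod_eq_of_lt (Finset.mem_range.1 hj)]
      · rfl
    · rfl
  rw [Finset.sum_eq_single (n % p) hterm
    (fun hnot => absurd (Finset.mem_range.2 (Nat.mod_lt n hp0)) hnot)]
  rw [pow_p_eq_expand, Polynomial.coeff_mul_X_pow', if_pos (Nat.mod_le n p),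
    Polynomial.coeff_expand hp0]
  have hsub : n - n % p = p * (n / p) :=
    Nat.sub_eq_of_eq_add (Nat.div_add_mod n p).symm
  rw [hsub, if_pos ⟨n / p, rfl⟩, Nat.mul_div_cancel_left _ hp0, hgcoeff]
  split_ifs with h3
  · rw [Nat.div_add_mod n p]
  · have hlt : f.natDegree < n :=
      lt_of_lt_of_le (by omega) (Nat.div_le_self n p)
    exact Polynomial.coeff_eq_zero_of_natDegree_lt hlt

theorem ratfunc_split (p : ℕ) [Fact p.Prime] (c : RatFunc (ZMod p)) :
    ∃ d : ℕ → RatFunc (ZMod p), c = ∑ j ∈ Finset.range p, (d j) ^ p * RatFunc.X ^ j := by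
  have hp1 : p = (p - 1) + 1 := by
    have := (Fact.out (p := p.Prime)).two_le; omega
  obtain ⟨g, hg⟩ := poly_split p (c.num * c.denom ^ (p - 1))
  set φ := algebraMap (Polynomial (ZMod p)) (RatFunc (ZMod p)) with hφ
  have hB : φ c.denom ≠ 0 := RatFunc.algebraMap_ne_zero (RatFunc.denom_ne_zero c)
  refine ⟨fun j => φ (g j) / φ c.denom, ?_⟩
  have hstep : ∀ j ∈ Finset.range p, (φ (g j) / φ c.denom) ^ p * RatFunc.X ^ j
      = φ ((g j) ^ p * Polynomial.X ^ j) / (φ c.denom) ^ p := by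
    intro j _
    rw [div_pow, map_mul, map_pow, map_pow, RatFunc.algebraMap_X, div_mul_eq_mul_div]
  have hc : φ c.num = c * φ c.denom := (div_eq_iff hB).1 (RatFunc.num_div_denom c)
  have hpow : (φ c.denom) ^ p = φ c.denom ^ (p - 1) * φ c.denom := by
    rw [← pow_succ]
    exact congrArg (fun n => φ c.denom ^ n) hp1
  rw [Finset.sum_congr rfl hstep, ← Finset.sum_div, ← map_sum, ← hg,
    eq_div_iff (pow_ne_zero p hB), map_mul, map_pow, hc, hpow]
  ring
  
theorem span_top_of_le {K : Type*} [Field K] {A B : Subfield K} (hAB : A ≤ B) (S : Set K)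
    (hS : Submodule.span A S = ⊤) : Submodule.span B S = ⊤ := by
  rw [eq_top_iff]
  intro u hu'
  have hu : u ∈ Submodule.span A S := hS ▸ Submodule.mem_top
  clear hu' 
  induction hu using Submodule.span_induction with
  | mem x hx => exact Submodule.subset_span hx
  | zero => exact zero_mem _
  | add x y _ _ hx hy => exact add_mem hx hy
  | smul a x _ hx =>
    have h2 : a • x = (⟨(a : K), hAB a.2⟩ : B) • x := by
      rw [Subfield.smul_def, Subfield.smul_def]
    rw [h2]
    exact Submodule.smul_mem _ _ hx

end PRiccatiAux

namespace PRiccatiAux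

set_option maxHeartbeats 1000000 in
theorem decomp (p : ℕ) [Fact p.Prime] (K : Type*) [Field K]
    [Algebra (RatFunc (ZMod p)) K]
    [FiniteDimensional (RatFunc (ZMod p)) K]
    (v : K → WithTop ℤ)
    (hv_top : ∀ a : K, v a = ⊤ ↔ a = 0)
    (hv_mul : ∀ a b : K, v (a * b) = v a + v b)
    (hv_add : ∀ a b : K, min (v a) (v b) ≤ v (a + b))
    (t : K) (ht : v t = 1)
    (hvdec : ∀ (h : K) (w : ℕ → K),
      h = ∑ j ∈ Finset.range p, (w j) ^ p * t ^ j →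
      ∀ j ∈ Finset.range p, v h ≤ v ((w j) ^ p * t ^ j))
    (u : K) : ∃ w : ℕ → K, u = ∑ j ∈ Finset.range p, (w j) ^ p * t ^ j := by
  classical
  have hp2 := (Fact.out (p := p.Prime)).two_le
  have hp0 : 0 < p := by omega
  haveI : CharP (RatFunc (ZMod p)) p :=
    charP_of_injective_algebraMap (RatFunc.algebraMap_injective (ZMod p)) p
  haveI : CharP K p :=
    charP_of_injective_algebraMap (algebraMap (RatFunc (ZMod p)) K).injective p
  set F := RatFunc (ZMod p) with hF
  -- the Frobenius ring hom
  set Fr : K →+* K :=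
    { toFun := fun a => a ^ p
      map_one' := one_pow p
      map_mul' := fun a b => mul_pow a b p
      map_zero' := zero_pow (by omega)
      map_add' := fun a b => add_pow_char a b p } with hFrdef
  have hFr : ∀ a : K, Fr a = a ^ p := fun a => rfl
  set sf : Subfield K := (algebraMap F K).fieldRange with hsf
  set Kp : Subfield K := Fr.fieldRange with hKp
  set sfp : Subfield K := (Fr.comp (algebraMap F K)).fieldRange with hsfp
  have hsfp_sf : sfp ≤ sf := by
    rintro a ⟨c, rfl⟩
    exact ⟨c ^ p, by rw [map_pow]; rfl⟩
  have hsfp_Kp : sfp ≤ Kp := by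
    rintro a ⟨c, rfl⟩
    exact ⟨algebraMap F K c, rfl⟩
  letI : Algebra sfp Kp := (Subfield.inclusion hsfp_Kp).toAlgebra
  haveI : IsScalarTower sfp Kp K := IsScalarTower.of_algebraMap_eq (fun x => rfl)
  have hsmulK : ∀ (s : Subfield K) (c : s) (x : K), c • x = (c : K) * x := fun s c x => by
    rw [Subfield.smul_def, smul_eq_mul]
  -- K is module-finite over sf
  obtain ⟨sFin, hsFin⟩ := Module.Finite.fg_top (R := F) (M := K)
  have hspan_sf : Submodule.span sf (↑sFin : Set K) = ⊤ := by
    rw [eq_top_iff]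
    intro z hz'
    have hz : z ∈ Submodule.span F ↑sFin := hsFin ▸ Submodule.mem_top
    clear hz'
    induction hz using Submodule.span_induction with
    | mem x hx => exact Submodule.subset_span hx
    | zero => exact zero_mem _
    | add x y _ _ hx hy => exact add_mem hx hy
    | smul a x _ hx =>
      have h2 : a • x = (⟨algebraMap F K a, ⟨a, rfl⟩⟩ : sf) • x := by
        rw [hsmulK, Algebra.smul_def]
      rw [h2]
      exact Submodule.smul_mem _ _ hx
  haveI hModsf : Module.Finite sf K := ⟨⟨sFin, hspan_sf⟩⟩
  set N := Module.finrank sf K with hN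
  have hNpos : 0 < N := Module.finrank_pos
  set e : Module.Basis (Fin N) sf K := Module.finBasis sf K with he
  set xK : K := algebraMap F K RatFunc.X with hxK
  have hmem_sfp : ∀ c : F, Fr (algebraMap F K c) ∈ sfp := fun c => ⟨c, rfl⟩
  set S1 : Set K := Set.range (fun j : Fin p => xK ^ (j : ℕ)) with hS1
  have hFsplit : ∀ c : F, algebraMap F K c ∈ Submodule.span sfp S1 := by
    intro c
    obtain ⟨d, hd⟩ := ratfunc_split p c
    rw [hd, map_sum]
    refine Submodule.sum_mem _ fun j hj => ?_
    rw [map_mul, map_pow, map_pow]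
    have hrw : (algebraMap F K (d j)) ^ p * (algebraMap F K RatFunc.X) ^ j
        = (⟨Fr (algebraMap F K (d j)), hmem_sfp _⟩ : sfp) • (xK ^ j) := by
      rw [hsmulK]; rfl
    rw [hrw]
    exact Submodule.smul_mem _ _ (Submodule.subset_span ⟨⟨j, Finset.mem_range.1 hj⟩, rfl⟩)
  set T : Set K := Set.range (fun ji : Fin p × Fin N => xK ^ ((ji.1 : ℕ)) * e ji.2) with hT
  have hmulT : ∀ cK ∈ sf, ∀ z ∈ Submodule.span sfp T, cK * z ∈ Submodule.span sfp T := by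
    rintro cK ⟨cF, rfl⟩ z hz
    induction hz using Submodule.span_induction with
    | mem w hw =>
      obtain ⟨⟨j', i⟩, rfl⟩ := hw
      have hc := hFsplit cF
      refine Submodule.span_induction
        (p := fun x _ => x * (xK ^ ((j' : Fin p) : ℕ) * e i) ∈ Submodule.span sfp T)
        ?_ ?_ ?_ ?_ hc
      · intro x hx
        obtain ⟨j'', rfl⟩ := hx
        simp only
        set m : ℕ := (j'' : ℕ) + (j' : ℕ) with hm
        have h1 : xK ^ ((j'':ℕ)) * (xK ^ ((j':ℕ)) * e i) = xK ^ m * e i := by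
          rw [← mul_assoc, ← pow_add]
        have h2 : xK ^ m = Fr (algebraMap F K (RatFunc.X ^ (m / p))) * xK ^ (m % p) := by
          rw [map_pow, hFr, ← pow_mul, ← pow_add, mul_comm (m / p) p, Nat.div_add_mod]
        rw [h1, h2, mul_assoc]
        have hrw : Fr (algebraMap F K (RatFunc.X ^ (m / p))) * (xK ^ (m % p) * e i)
            = (⟨Fr (algebraMap F K (RatFunc.X ^ (m / p))), hmem_sfp _⟩ : sfp) •
              (xK ^ (m % p) * e i) := by
          rw [hsmulK]
        rw [hrw]
        refine Submodule.smul_mem _ _ (Submodule.subset_span ?_)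
        exact ⟨(⟨m % p, Nat.mod_lt _ hp0⟩, i), rfl⟩
      · show (0:K) * (xK ^ ((j' : Fin p) : ℕ) * e i) ∈ Submodule.span sfp T
        rw [zero_mul]; exact zero_mem _
      · intro x y _ _ hx hy
        show (x + y) * (xK ^ ((j' : Fin p) : ℕ) * e i) ∈ Submodule.span sfp T
        rw [add_mul]; exact add_mem hx hy
      · intro a x _ hx
        show (a • x) * (xK ^ ((j' : Fin p) : ℕ) * e i) ∈ Submodule.span sfp T
        rw [hsmulK, mul_assoc]
        have hrw : (a : K) * (x * (xK ^ (((j' : Fin p) :ℕ)) * e i)) =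
            a • (x * (xK ^ (((j' : Fin p) :ℕ)) * e i)) := by
          rw [hsmulK]
        rw [hrw]
        exact Submodule.smul_mem _ _ hx
    | zero => rw [mul_zero]; exact zero_mem _
    | add z1 z2 _ _ h1 h2 => rw [mul_add]; exact add_mem h1 h2
    | smul a z _ hz2 => rw [mul_smul_comm]; exact Submodule.smul_mem _ _ hz2
  have hTspan : Submodule.span sfp T = ⊤ := by
    rw [eq_top_iff]
    intro z hz'
    clear hz'
    have hz : z ∈ Submodule.span sf (Set.range e) := by
      rw [e.span_eq]; exact Submodule.mem_top
    induction hz using Submodule.span_induction with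
    | mem w hw =>
      obtain ⟨i, rfl⟩ := hw
      refine Submodule.subset_span ⟨(⟨0, hp0⟩, i), ?_⟩
      simp
    | zero => exact zero_mem _
    | add x y _ _ hx hy => exact add_mem hx hy
    | smul a w _ hw =>
      rw [hsmulK]
      exact hmulT (a : K) a.2 w hw
  haveI hModFin_sfp : Module.Finite sfp K := by
    refine ⟨⟨Finset.image (fun ji : Fin p × Fin N => xK ^ ((ji.1 : ℕ)) * e ji.2) Finset.univ, ?_⟩⟩
    rw [Finset.coe_image, Finset.coe_univ, Set.image_univ]
    exact hTspan
  haveI hModFin_Kp : Module.Finite Kp K := by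
    refine ⟨⟨Finset.image (fun ji : Fin p × Fin N => xK ^ ((ji.1 : ℕ)) * e ji.2) Finset.univ, ?_⟩⟩
    rw [Finset.coe_image, Finset.coe_univ, Set.image_univ]
    exact span_top_of_le hsfp_Kp T hTspan
  have hval : ∀ (a : sfp) (b : Kp), ((a • b : Kp) : K) = (a : K) * (b : K) := fun a b => rfl
  haveI hModFin_sfpKp : Module.Finite sfp Kp := by
    refine FiniteDimensional.of_injective
      (⟨⟨Subtype.val, fun a b => rfl⟩, fun c a => by
        show ((c • a : Kp) : K) = c • (a : K)
        rw [hval, hsmulK]⟩ : Kp →ₗ[sfp] K) ?_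
    intro a b hab
    exact Subtype.ext hab
  -- rank bounds
  have hrank1 : Module.finrank sfp K ≤ p * N := by
    refine le_trans (finrank_le_of_span_eq_top hTspan) ?_
    simp
  have hrank2 : N ≤ Module.finrank sfp Kp := by
    have hg : LinearIndependent sfp (fun i : Fin N => (⟨(e i : K) ^ p, ⟨e i, rfl⟩⟩ : Kp)) := by
      rw [Fintype.linearIndependent_iff]
      intro c hc i
      have h2 := congrArg (Subtype.val) hc
      rw [AddSubmonoidClass.coe_finset_sum] at h2
      simp only [hval] at h2
      -- h2 : ∑ i, (c i : K) * (e i)^p = 0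
      choose cf hcf using fun i : Fin N => RingHom.mem_fieldRange.1 (c i).2
      have h3 : Fr (∑ i : Fin N, (algebraMap F K (cf i)) * (e i : K)) = 0 := by
        rw [map_sum]
        rw [show (0 : K) = Subtype.val (0 : Kp) from rfl]
        rw [← h2]
        refine Finset.sum_congr rfl fun i2 _ => ?_
        rw [map_mul, hFr ((e i2 : K)), ← hcf i2]
        rfl
      have h4 : (∑ i : Fin N, (algebraMap F K (cf i)) * (e i : K)) = 0 := by
        have := congrArg (fun z => z) h3
        rw [hFr] at h3
        exact pow_eq_zero_iff (by omega : p ≠ 0) |>.1 h3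
      have h5 := Fintype.linearIndependent_iff.1 e.linearIndependent
        (fun i2 => (⟨algebraMap F K (cf i2), ⟨cf i2, rfl⟩⟩ : sf)) ?_ i
      · apply Subtype.ext
        have h6 : algebraMap F K (cf i) = 0 := congrArg Subtype.val h5
        rw [← hcf i]
        show Fr (algebraMap F K (cf i)) = (0 : K)
        rw [h6, map_zero]
      · rw [← h4]
        refine Finset.sum_congr rfl fun i2 _ => ?_
        rw [hsmulK]
    have := hg.fintype_card_le_finrank
    simpa using this
  have hrank3 := Module.finrank_mul_finrank sfp Kp K
  have hKpK_le : Module.finrank Kp K ≤ p := by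
    have h6 : N * Module.finrank Kp K ≤ (Module.finrank sfp Kp) * Module.finrank Kp K :=
      Nat.mul_le_mul_right _ hrank2
    rw [hrank3] at h6
    have h7 : N * Module.finrank Kp K ≤ N * p := by
      refine le_trans h6 ?_
      rw [mul_comm N p]
      exact hrank1
    exact Nat.le_of_mul_le_mul_left h7 hNpos
  -- the powers of t are independent over Kp
  have htne : t ≠ 0 := by
    intro h0
    have h1 := (hv_top t).2 h0
    rw [ht] at h1
    simp at h1
  have hindT : LinearIndependent Kp (fun j : Fin p => t ^ (j : ℕ)) := by
    rw [Fintype.linearIndependent_iff]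
    intro c hc i
    choose w hw using fun j : Fin p => RingHom.mem_fieldRange.1 (c j).2
    set W : ℕ → K := fun j => if h : j < p then w ⟨j, h⟩ else 0 with hW
    have hWj : ∀ j : Fin p, W (j : ℕ) = w j := by
      intro j
      rw [hW]
      simp only [j.isLt, dif_pos, Fin.eta]
    have h0 : (0 : K) = ∑ j ∈ Finset.range p, (W j) ^ p * t ^ j := by
      rw [← Fin.sum_univ_eq_sum_range (fun j => (W j) ^ p * t ^ j) p, ← hc]
      refine Finset.sum_congr rfl fun j _ => ?_
      rw [hsmulK]
      congr 1
      rw [hWj j, ← hFr, hw j]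
    have hge := hvdec 0 W h0 (i : ℕ) (Finset.mem_range.2 i.isLt)
    rw [(hv_top 0).2 rfl] at hge
    have hterm0 : (W (i : ℕ)) ^ p * t ^ (i : ℕ) = 0 := (hv_top _).1 (top_le_iff.1 hge)
    rw [hWj i] at hterm0
    have hwz : w i = 0 := by
      rcases mul_eq_zero.1 hterm0 with h | h
      · exact pow_eq_zero_iff (by omega : p ≠ 0) |>.1 h
      · exact absurd h (pow_ne_zero _ htne)
    apply Subtype.ext
    rw [← hw i, hwz, map_zero]
    rfl
  have hple : p ≤ Module.finrank Kp K := by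
    have := hindT.fintype_card_le_finrank
    simpa using this
  have hcard : Fintype.card (Fin p) = Module.finrank Kp K := by
    rw [Fintype.card_fin]
    omega
  haveI : Nonempty (Fin p) := ⟨⟨0, hp0⟩⟩
  set b := basisOfLinearIndependentOfCardEqFinrank hindT hcard with hb
  have hbeq : ∀ j : Fin p, b j = t ^ (j : ℕ) := fun j => by
    rw [hb, coe_basisOfLinearIndependentOfCardEqFinrank]
  choose w' hw' using fun j : Fin p => RingHom.mem_fieldRange.1 (b.repr u j).2
  refine ⟨fun j => if h : j < p then w' ⟨j, h⟩ else 0, ?_⟩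
  rw [← Fin.sum_univ_eq_sum_range (fun j => ((if h : j < p then w' ⟨j, h⟩ else 0)) ^ p * t ^ j) p,
    ← b.sum_repr u]
  refine Finset.sum_congr rfl fun j _ => ?_
  rw [hsmulK, hbeq j]
  congr 1
  rw [dif_pos j.isLt]
  rw [show (⟨(j : ℕ), j.isLt⟩ : Fin p) = j from Fin.eta j j.isLt, ← hFr, hw' j]

end PRiccatiAux

/-- Let `p` be a prime and `K` a finite separable field extension of `𝔽_p(x)`, with `D`
the derivation on `K` extending `d/dx` (an additive map satisfying the Leibniz rule, with
`D(x) = 1`). Let `v` be a normalized additive discrete valuation on `K` (values in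
`ℤ ∪ {∞}`, with `v a = ∞ ↔ a = 0`, multiplicativity, the ultrametric inequality, and
surjectivity onto `ℤ`) and let `t` be a uniformizer for `v`. If `f, y ∈ K` satisfy the
`p`-Riccati equation `D^{p-1}(f) + f^p = y`, then
`p·v(f) ≥ min(0, v(y), p·(v(D(t)) − 1))`. -/
theorem pRiccati_valuation_lower_bound
    (p : ℕ) [Fact p.Prime] (K : Type*) [Field K]
    [Algebra (RatFunc (ZMod p)) K]
    [FiniteDimensional (RatFunc (ZMod p)) K]
    [Algebra.IsSeparable (RatFunc (ZMod p)) K]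
    (D : K → K)
    (hadd : ∀ u v : K, D (u + v) = D u + D v)
    (hleib : ∀ u v : K, D (u * v) = u * D v + v * D u)
    (hx : D (algebraMap (RatFunc (ZMod p)) K RatFunc.X) = 1)
    (v : K → WithTop ℤ)
    (hv_top : ∀ a : K, v a = ⊤ ↔ a = 0)
    (hv_mul : ∀ a b : K, v (a * b) = v a + v b)
    (hv_add : ∀ a b : K, min (v a) (v b) ≤ v (a + b))
    (hv_surj : ∀ n : ℤ, ∃ a : K, v a = (n : WithTop ℤ))
    (t : K) (ht : v t = 1)
    (f y : K) (hric : D^[p - 1] f + f ^ p = y) :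
    min 0 (min (v y) (p • (v (D t) - 1))) ≤ p • v f := by
  haveI : CharP (RatFunc (ZMod p)) p :=
    charP_of_injective_algebraMap (RatFunc.algebraMap_injective (ZMod p)) p
  haveI : CharP K p :=
    charP_of_injective_algebraMap (algebraMap (RatFunc (ZMod p)) K).injective p
  have hpK : (p : K) = 0 := CharP.cast_eq_zero K p
  have hvdec : ∀ (h : K) (w : ℕ → K),
      h = ∑ j ∈ Finset.range p, (w j) ^ p * t ^ j →
      ∀ j ∈ Finset.range p, v h ≤ v ((w j) ^ p * t ^ j) :=
    fun h w hd => PRiccatiAux.v_decomp_ge v hv_top hv_mul hv_add t ht h w hd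
  have hdec : ∀ u : K, ∃ w : ℕ → K, u = ∑ j ∈ Finset.range p, (w j) ^ p * t ^ j :=
    fun u => PRiccatiAux.decomp p K v hv_top hv_mul hv_add t ht hvdec u
  exact PRiccatiAux.main_aux v hv_top hv_mul hv_add t ht D hadd hleib hpK hdec
    (algebraMap (RatFunc (ZMod p)) K RatFunc.X) hx f y hric
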